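/- Let m, n be positive integers with n ≤ m. Then 𝒮_m(n) is full if and only if m·n ≤ (n+2)². In particular, 𝒮_m(n) is full whenever n ≤ m ≤ 8. -/
import Mathlib


/-- `S m n` is the set of integers `T` such that there exist integers
`x₁,…,x_m` with `x₁+⋯+x_m = T` and `x₁²+⋯+x_m² = n`. -/
def S (m n : ℕ) : Set ℤ :=
  {T : ℤ | ∃ x : Fin m → ℤ, (∑ i, x i) = T ∧ (∑ i, (x i) ^ 2) = (n : ℤ)}

/-- `sos m` is the set of integers expressible as a sum of `m` squares of integers. -/
def sos (m : ℕ) : Set ℤ :=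
  {n : ℤ | ∃ a : Fin m → ℤ, (∑ i, (a i) ^ 2) = n}

/-- The binary quadratic form `aX² + 2hXY + bY²` is a sum of `m` squares of
integral linear forms. -/
def IsSumSqLin (m : ℕ) (a h b : ℤ) : Prop :=
  ∃ α β : Fin m → ℤ,
    (∑ i, (α i) ^ 2) = a ∧ (∑ i, α i * β i) = h ∧ (∑ i, (β i) ^ 2) = b

/-- `S m n` is full: every `T` with `T ≡ n (mod 2)` and `T² < mn` lies in `S m n`. -/
def Sfull (m n : ℕ) : Prop :=
  ∀ T : ℤ, T % 2 = (n : ℤ) % 2 → T ^ 2 < (m : ℤ) * n → T ∈ S m n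

lemma key (m a b : ℕ) (h : a + b ≤ m) :
    ∃ x : Fin m → ℤ, (∑ i, x i) = (a:ℤ) - b ∧ (∑ i, (x i) ^ 2) = (a:ℤ) + b := by
  set f : ℕ → ℤ := fun j => if j < a then 1 else if j < a + b then -1 else 0 with hf
  have e1 : (∑ i : Fin m, f ↑i) = ∑ i ∈ Finset.range m, f i := Fin.sum_univ_eq_sum_range f m
  have e2 : (∑ i : Fin m, (f ↑i)^2) = ∑ i ∈ Finset.range m, (f i)^2 :=
    Fin.sum_univ_eq_sum_range (fun j => (f j)^2) m
  have c1 : ∀ i ∈ Finset.range a, f i = 1 := fun i hi => by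
    simp [hf, Finset.mem_range.mp hi]
  have c2 : ∀ i ∈ Finset.Ico a (a+b), f i = -1 := fun i hi => by
    have := Finset.mem_Ico.mp hi
    simp [hf, Nat.not_lt.mpr this.1, this.2]
  have c3 : ∀ i ∈ Finset.Ico (a+b) m, f i = 0 := fun i hi => by
    have := Finset.mem_Ico.mp hi
    have h1 : ¬ (i < a) := by omega
    have h2 : ¬ (i < a + b) := by omega
    simp [hf, h1, h2]
  have s1 : ∑ i ∈ Finset.range a, f i = (a:ℤ) := by
    rw [Finset.sum_congr rfl c1]; simp
  have s2 : ∑ i ∈ Finset.Ico a (a+b), f i = -(b:ℤ) := by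
    rw [Finset.sum_congr rfl c2]; simp
  have s3 : ∑ i ∈ Finset.Ico (a+b) m, f i = 0 := by
    rw [Finset.sum_congr rfl c3]; simp
  have q1 : ∑ i ∈ Finset.range a, (f i)^2 = (a:ℤ) := by
    rw [Finset.sum_congr rfl (fun i hi => by rw [c1 i hi])]; simp
  have q2 : ∑ i ∈ Finset.Ico a (a+b), (f i)^2 = (b:ℤ) := by
    rw [Finset.sum_congr rfl (g := fun _ => (1:ℤ)) (fun i hi => by rw [c2 i hi]; norm_num)]; simp
  have q3 : ∑ i ∈ Finset.Ico (a+b) m, (f i)^2 = 0 := by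
    rw [Finset.sum_congr rfl (g := fun _ => (0:ℤ)) (fun i hi => by rw [c3 i hi]; norm_num)]; simp
  refine ⟨fun i => f ↑i, ?_, ?_⟩
  · rw [e1, ← Finset.sum_range_add_sum_Ico _ h,
      ← Finset.sum_range_add_sum_Ico _ (Nat.le_add_right a b), s1, s2, s3]
    ring
  · rw [e2, ← Finset.sum_range_add_sum_Ico _ h,
      ← Finset.sum_range_add_sum_Ico _ (Nat.le_add_right a b), q1, q2, q3]
    ring

theorem stmt2 (m n : ℕ) (hm : 0 < m) (hn : 0 < n) (hnm : n ≤ m) :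
    (Sfull m n ↔ m * n ≤ (n + 2) ^ 2) ∧ (m ≤ 8 → Sfull m n) := by
  have hfull : m * n ≤ (n + 2) ^ 2 → Sfull m n := by
    intro hle T hpar hT2
    have hle' : (m:ℤ) * n ≤ ((n:ℤ) + 2)^2 := by exact_mod_cast hle
    have hsq : T^2 < ((n:ℤ)+2)^2 := lt_of_lt_of_le hT2 hle'
    have hub : T < (n:ℤ) + 2 := by nlinarith
    have hlb : -((n:ℤ) + 2) < T := by nlinarith
    set k : ℤ := ((n:ℤ) - T) / 2 with hkdef
    have hk0 : 0 ≤ k := by omega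
    have hkn : k ≤ (n:ℤ) := by omega
    have hTk : T = (n:ℤ) - 2 * k := by omega
    set a : ℕ := ((n:ℤ) - k).toNat with ha
    set b : ℕ := k.toNat with hb
    have haz : (a:ℤ) = (n:ℤ) - k := Int.toNat_of_nonneg (by omega)
    have hbz : (b:ℤ) = k := Int.toNat_of_nonneg hk0
    have hab : a + b ≤ m := by
      have : (a:ℤ) + (b:ℤ) = (n:ℤ) := by omega
      have hn' : a + b = n := by exact_mod_cast this
      omega
    obtain ⟨x, hx1, hx2⟩ := key m a b hab
    exact ⟨x, by omega, by omega⟩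
  have hfwd : Sfull m n → m * n ≤ (n + 2) ^ 2 := by
    intro hS
    by_contra hlt
    push_neg at hlt
    have hlt' : ((n:ℤ) + 2)^2 < (m:ℤ) * n := by exact_mod_cast hlt
    obtain ⟨x, hx1, hx2⟩ := hS ((n:ℤ) + 2) (by omega) hlt'
    have hle : (∑ i : Fin m, x i) ≤ ∑ i : Fin m, (x i)^2 :=
      Finset.sum_le_sum (fun i _ => by nlinarith [sq_nonneg (x i), sq_nonneg (x i - 1)])
    omega
  exact ⟨⟨hfwd, hfull⟩, fun h8 => hfull (by zify; nlinarith [sq_nonneg ((n:ℤ) - 2), (show (m:ℤ) ≤ 8 from by exact_mod_cast h8), (show (1:ℤ) ≤ n from by exact_mod_cast hn)])⟩
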